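/- Fix m, N ∈ ℕ⁺ and ρ ∈ (0,1). Let ν be the self-similar measure for the IFS {τ_d(x) = (-1)^{⌊d/m⌋}ρ(x+d)}_{d=0}^{2Nm-1} with equal weights, and let μ be the self-similar measure for the IFS {x ↦ ρ(x+d)}_{d∈D} with equal weights, where D = D_m ⊕ 2mD_N ⊕ (1+mρ-2Nm)D_2. Then ν = μ. -/

import Mathlib

open MeasureTheory
open scoped ENNReal

lemma ext_of_lip (μ ν : Measure ℝ) [IsProbabilityMeasure μ] [IsProbabilityMeasure ν]
    (h : ∀ (g : ℝ → ℝ) (L M : ℝ), 0 ≤ L → 0 ≤ M → Continuous g → (∀ x, |g x| ≤ M) →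
      (∀ x y, |g x - g y| ≤ L * |x - y|) → ∫ x, g x ∂μ = ∫ x, g x ∂ν) : μ = ν := by
  apply ext_of_generate_finite {s : Set ℝ | IsClosed s}
  · rw [BorelSpace.measurable_eq (α := ℝ), borel_eq_generateFrom_isClosed]
  · exact isPiSystem_isClosed
  · intro F hF
    rcases F.eq_empty_or_nonempty with rfl | hne
    · simp
    have hFc : IsClosed F := hF
    set g : ℕ → ℝ → ℝ := fun n x => max (1 - (n+1) * Metric.infDist x F) 0 with hg
    have hcont : ∀ n, Continuous (g n) := by
      intro n
      exact ((continuous_const.sub ((continuous_const.mul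
        (Metric.continuous_infDist_pt F)))).max continuous_const)
    have hbd : ∀ n x, |g n x| ≤ 1 := by
      intro n x
      rw [abs_le]
      constructor
      · have := le_max_right (1 - (n+1) * Metric.infDist x F) 0; linarith
      · have h0 : 0 ≤ Metric.infDist x F := Metric.infDist_nonneg
        have : (0:ℝ) ≤ (n+1) * Metric.infDist x F := by positivity
        apply max_le <;> linarith
    have hlip : ∀ n x y, |g n x - g n y| ≤ (n+1) * |x - y| := by
      intro n x y
      have h1 : |g n x - g n y| ≤ |(1 - (n+1) * Metric.infDist x F) -
          (1 - (n+1) * Metric.infDist y F)| := abs_max_sub_max_le_abs _ _ _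
      have h2 : |Metric.infDist x F - Metric.infDist y F| ≤ |x - y| := by
        have := (Metric.lipschitz_infDist_pt F).dist_le_mul x y
        simpa [Real.dist_eq] using this
      calc |g n x - g n y| ≤ ((n:ℝ)+1) * |Metric.infDist x F - Metric.infDist y F| := by
            rw [show (1 - (n+1) * Metric.infDist x F) - (1 - (n+1) * Metric.infDist y F)
              = ((n:ℝ)+1) * (Metric.infDist y F - Metric.infDist x F) by ring] at h1
            rw [abs_mul, abs_of_nonneg (by positivity : (0:ℝ) ≤ (n:ℝ)+1)] at h1
            rwa [abs_sub_comm (Metric.infDist x F)]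
        _ ≤ ((n:ℝ)+1) * |x - y| := by
            have : (0:ℝ) ≤ (n:ℝ)+1 := by positivity
            exact mul_le_mul_of_nonneg_left h2 this
    have heq : ∀ n, ∫ x, g n x ∂μ = ∫ x, g n x ∂ν := fun n =>
      h (g n) (n+1) 1 (by positivity) zero_le_one (hcont n) (hbd n) (hlip n)
    have hptw : ∀ x, Filter.Tendsto (fun n => g n x) Filter.atTop (nhds (F.indicator 1 x)) := by
      intro x
      by_cases hx : x ∈ F
      · have : ∀ n, g n x = 1 := by
          intro n
          simp [hg, Metric.infDist_zero_of_mem hx]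
        simp only [this, Set.indicator_of_mem hx, Pi.one_apply]
        exact tendsto_const_nhds
      · have hd : 0 < Metric.infDist x F := (hFc.notMem_iff_infDist_pos hne).1 hx
        have : ∀ᶠ n : ℕ in Filter.atTop, g n x = 0 := by
          obtain ⟨n₀, hn₀⟩ := exists_nat_gt (1 / Metric.infDist x F)
          filter_upwards [Filter.eventually_ge_atTop n₀] with n hn
          have h1 : 1 / Metric.infDist x F < (n:ℝ) + 1 := by
            calc 1 / Metric.infDist x F < n₀ := hn₀
              _ ≤ (n:ℝ) := by exact_mod_cast hn
              _ ≤ (n:ℝ)+1 := by linarith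
          have : 1 < ((n:ℝ)+1) * Metric.infDist x F := by
            rw [div_lt_iff₀ hd] at h1; linarith
          simp only [hg]
          rw [max_eq_right]; linarith
        rw [Set.indicator_of_notMem hx]
        exact Filter.Tendsto.congr' (this.mono fun n hn => hn.symm) tendsto_const_nhds
    have hint : ∀ (ρ : Measure ℝ) [IsProbabilityMeasure ρ],
        Filter.Tendsto (fun n => ∫ x, g n x ∂ρ) Filter.atTop (nhds (∫ x, F.indicator 1 x ∂ρ)) := by
      intro ρ _
      apply tendsto_integral_of_dominated_convergence (fun _ => 1)
      · exact fun n => (hcont n).aestronglyMeasurable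
      · exact integrable_const 1
      · intro n
        exact Filter.Eventually.of_forall fun x => by simpa [Real.norm_eq_abs] using hbd n x
      · exact Filter.Eventually.of_forall hptw
    have hμi := hint μ
    have hνi := hint ν
    simp only [heq] at hμi
    have : ∫ x, F.indicator 1 x ∂μ = ∫ x, F.indicator 1 x ∂ν := tendsto_nhds_unique hμi hνi
    rw [integral_indicator_one hFc.measurableSet, integral_indicator_one hFc.measurableSet] at this
    exact (ENNReal.toReal_eq_toReal_iff' (measure_ne_top μ F) (measure_ne_top ν F)).1 this
  · simp

-- one-step integral identity
lemma step_integral {ι : Type} (s : Finset ι) (a b : ι → ℝ)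
    (μ : Measure ℝ) [IsProbabilityMeasure μ]
    (hμ : μ = (s.card : ℝ≥0∞)⁻¹ • ∑ k ∈ s, Measure.map (fun x => a k * x + b k) μ)
    (g : ℝ → ℝ) (M : ℝ) (hgc : Continuous g) (hgb : ∀ x, |g x| ≤ M) :
    ∫ x, g x ∂μ = ((s.card : ℝ))⁻¹ * ∑ k ∈ s, ∫ x, g (a k * x + b k) ∂μ := by
  have hmeas : ∀ k : ι, Measurable (fun x : ℝ => a k * x + b k) := fun k =>
    (measurable_id.const_mul (a k)).add_const (b k)
  have hint : ∀ k ∈ s, Integrable g (Measure.map (fun x => a k * x + b k) μ) := by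
    intro k _
    haveI : IsProbabilityMeasure (Measure.map (fun x => a k * x + b k) μ) :=
      Measure.isProbabilityMeasure_map (hmeas k).aemeasurable
    exact (integrable_const M).mono' hgc.aestronglyMeasurable
      (Filter.Eventually.of_forall fun x => by simpa [Real.norm_eq_abs] using hgb x)
  conv_lhs => rw [hμ]
  rw [integral_smul_measure, integral_finset_sum_measure hint]
  rw [ENNReal.toReal_inv, ENNReal.toReal_natCast, smul_eq_mul]
  congr 1
  apply Finset.sum_congr rfl
  intro k hk
  exact integral_map (hmeas k).aemeasurable hgc.aestronglyMeasurable

lemma selfSimilar_unique {ι : Type} (s : Finset ι) (hs : 0 < s.card) (a b : ι → ℝ) (r : ℝ)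
    (hr0 : 0 ≤ r) (hr1 : r < 1) (ha : ∀ k ∈ s, |a k| ≤ r)
    (μ ν : Measure ℝ) [IsProbabilityMeasure μ] [IsProbabilityMeasure ν]
    (hμ : μ = (s.card : ℝ≥0∞)⁻¹ • ∑ k ∈ s, Measure.map (fun x => a k * x + b k) μ)
    (hν : ν = (s.card : ℝ≥0∞)⁻¹ • ∑ k ∈ s, Measure.map (fun x => a k * x + b k) ν) :
    μ = ν := by
  apply ext_of_lip
  intro g L M hL hM hgc hgb hglip
  -- suffices: ∀ ε > 0, |∫ g ∂μ - ∫ g ∂ν| ≤ 4 * M * ε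
  have main : ∀ ε : ℝ, 0 < ε → |∫ x, g x ∂μ - ∫ x, g x ∂ν| ≤ 4 * M * ε := by
    intro ε hε
    -- tightness: find K
    obtain ⟨K, hK0, hKμ, hKν⟩ : ∃ K : ℝ, 0 ≤ K ∧
        (μ ((Metric.closedBall (0:ℝ) K)ᶜ)).toReal ≤ ε ∧
        (ν ((Metric.closedBall (0:ℝ) K)ᶜ)).toReal ≤ ε := by
      have hanti : Antitone (fun n : ℕ => (Metric.closedBall (0:ℝ) (n:ℝ))ᶜ) := by
        intro i j hij
        exact Set.compl_subset_compl.2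
          (Metric.closedBall_subset_closedBall (by exact_mod_cast hij))
      have hempty : ⋂ n : ℕ, (Metric.closedBall (0:ℝ) (n:ℝ))ᶜ = ∅ := by
        ext x
        simp only [Set.mem_iInter, Set.mem_compl_iff, Metric.mem_closedBall, Real.dist_eq,
          sub_zero, Set.mem_empty_iff_false, iff_false, not_forall, not_not]
        exact exists_nat_ge |x|
      have htend : ∀ (ρ : Measure ℝ) [IsProbabilityMeasure ρ],
          Filter.Tendsto (fun n : ℕ => ρ ((Metric.closedBall (0:ℝ) (n:ℝ))ᶜ)) Filter.atTop
            (nhds 0) := by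
        intro ρ _
        have := MeasureTheory.tendsto_measure_iInter_atTop (μ := ρ)
          (fun n => measurableSet_closedBall.compl.nullMeasurableSet) hanti
          ⟨0, measure_ne_top ρ _⟩
        rwa [hempty, measure_empty] at this
      have hpos : (0:ℝ≥0∞) < ENNReal.ofReal ε := ENNReal.ofReal_pos.2 hε
      have hev := ((htend μ).eventually_lt_const hpos).and
        ((htend ν).eventually_lt_const hpos)
      obtain ⟨n, hn1, hn2⟩ := hev.exists
      exact ⟨(n:ℝ), Nat.cast_nonneg n, ENNReal.toReal_le_of_le_ofReal hε.le hn1.le,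
        ENNReal.toReal_le_of_le_ofReal hε.le hn2.le⟩
    set C : Set ℝ := Metric.closedBall (0:ℝ) K with hC
    -- induction claim
    have key : ∀ n : ℕ, ∀ g : ℝ → ℝ, ∀ L : ℝ, 0 ≤ L → Continuous g → (∀ x, |g x| ≤ M) →
        (∀ x y, |g x - g y| ≤ L * |x - y|) →
        |∫ x, g x ∂μ - ∫ x, g x ∂ν| ≤ 2 * (r ^ n * L * K + 2 * M * ε) := by
      intro n
      induction n with
      | zero =>
        intro g L hL hgc hgb hglip
        have habs : ∀ (ρ : Measure ℝ) [IsProbabilityMeasure ρ], (ρ Cᶜ).toReal ≤ ε →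
            |∫ x, g x ∂ρ - g 0| ≤ L * K + 2 * M * ε := by
          intro ρ _ hρtail
          have hginte : Integrable g ρ :=
            (integrable_const M).mono' hgc.aestronglyMeasurable
              (Filter.Eventually.of_forall fun x => by simpa [Real.norm_eq_abs] using hgb x)
          have h1 : ∫ x, g x ∂ρ - g 0 = ∫ x, (g x - g 0) ∂ρ := by
            rw [integral_sub hginte (integrable_const (g 0)), integral_const]
            simp
          rw [h1]
          have hφint : Integrable (fun x => L * K + Cᶜ.indicator (fun _ => 2 * M) x) ρ :=
            (integrable_const (L * K)).add
              ((integrable_const (2 * M)).indicator (measurableSet_closedBall.compl))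
          calc |∫ x, (g x - g 0) ∂ρ| ≤ ∫ x, |g x - g 0| ∂ρ := by
                simpa [Real.norm_eq_abs] using norm_integral_le_integral_norm (fun x => g x - g 0) (μ := ρ)
            _ ≤ ∫ x, (L * K + Cᶜ.indicator (fun _ => 2 * M) x) ∂ρ := by
                apply integral_mono _ hφint
                · intro x
                  by_cases hx : x ∈ C
                  · have hxK : |x| ≤ K := by
                      simpa [Real.dist_eq] using (Metric.mem_closedBall.1 hx)
                    have := hglip x 0
                    simp only [sub_zero] at this
                    have : |g x - g 0| ≤ L * K := this.trans (by
                      exact mul_le_mul_of_nonneg_left hxK hL)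
                    simpa [Set.indicator_of_notMem (by simpa using hx : x ∉ Cᶜ)] using this
                  · have : |g x - g 0| ≤ 2 * M :=
                      (abs_sub _ _).trans (by have := hgb x; have := hgb 0; linarith)
                    have hLK : 0 ≤ L * K := by positivity
                    simp only [Set.indicator_of_mem (by simpa using hx : x ∈ Cᶜ)]
                    linarith
                · exact hginte.sub (integrable_const (g 0)) |>.abs
            _ = L * K + 2 * M * (ρ Cᶜ).toReal := by
                rw [integral_add (integrable_const (L * K))
                  ((integrable_const (2 * M)).indicator (measurableSet_closedBall.compl)),
                  integral_const, integral_indicator_const _ (measurableSet_closedBall.compl)]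
                simp [mul_comm]; exact Or.inl rfl
            _ ≤ L * K + 2 * M * ε := by
                have : 0 ≤ 2 * M := by linarith
                nlinarith [hρtail]
        have hμa := habs μ hKμ
        have hνa := habs ν hKν
        have : |∫ x, g x ∂μ - ∫ x, g x ∂ν| ≤ |∫ x, g x ∂μ - g 0| + |∫ x, g x ∂ν - g 0| := by
          rw [show ∫ x, g x ∂μ - ∫ x, g x ∂ν = (∫ x, g x ∂μ - g 0) - (∫ x, g x ∂ν - g 0) by ring]
          exact abs_sub _ _
        simp only [pow_zero, one_mul]
        linarith
      | succ n ih =>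
        intro g L hL hgc hgb hglip
        rw [step_integral s a b μ hμ g M hgc hgb, step_integral s a b ν hν g M hgc hgb]
        rw [← mul_sub, ← Finset.sum_sub_distrib, abs_mul]
        have hcard : |((s.card : ℝ))⁻¹| = ((s.card : ℝ))⁻¹ := by
          rw [abs_of_nonneg]; exact inv_nonneg.2 (Nat.cast_nonneg _)
        rw [hcard]
        have hterm : ∀ k ∈ s, |∫ x, g (a k * x + b k) ∂μ - ∫ x, g (a k * x + b k) ∂ν| ≤
            2 * (r ^ n * (L * r) * K + 2 * M * ε) := by
          intro k hk
          apply ih (fun x => g (a k * x + b k)) (L * r) (by positivity)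
            (hgc.comp ((continuous_const.mul continuous_id).add continuous_const))
            (fun x => hgb _)
          intro x y
          calc |g (a k * x + b k) - g (a k * y + b k)| ≤ L * |(a k * x + b k) - (a k * y + b k)| :=
                hglip _ _
            _ = L * (|a k| * |x - y|) := by rw [show (a k * x + b k) - (a k * y + b k) = a k * (x - y) by ring, abs_mul]
            _ ≤ L * r * |x - y| := by
                rw [← mul_assoc]
                apply mul_le_mul_of_nonneg_right _ (abs_nonneg _)
                exact mul_le_mul_of_nonneg_left (ha k hk) hL
        calc ((s.card : ℝ))⁻¹ * |∑ k ∈ s, (∫ x, g (a k * x + b k) ∂μ - ∫ x, g (a k * x + b k) ∂ν)| ≤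
              ((s.card : ℝ))⁻¹ * ∑ k ∈ s, |∫ x, g (a k * x + b k) ∂μ - ∫ x, g (a k * x + b k) ∂ν| := by
              apply mul_le_mul_of_nonneg_left (Finset.abs_sum_le_sum_abs _ _) (inv_nonneg.2 (Nat.cast_nonneg _))
          _ ≤ ((s.card : ℝ))⁻¹ * ∑ k ∈ s, 2 * (r ^ n * (L * r) * K + 2 * M * ε) :=
              mul_le_mul_of_nonneg_left (Finset.sum_le_sum hterm) (inv_nonneg.2 (Nat.cast_nonneg _))
          _ = 2 * (r ^ (n+1) * L * K + 2 * M * ε) := by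
              rw [Finset.sum_const, nsmul_eq_mul, ← mul_assoc]
              rw [inv_mul_cancel₀ (by exact_mod_cast hs.ne' : (s.card : ℝ) ≠ 0)]
              ring
    -- let n → ∞
    have hlim : Filter.Tendsto (fun n : ℕ => 2 * (r ^ n * L * K + 2 * M * ε)) Filter.atTop
        (nhds (2 * (0 * L * K + 2 * M * ε))) := by
      apply Filter.Tendsto.const_mul
      apply Filter.Tendsto.add_const
      apply Filter.Tendsto.mul_const
      apply Filter.Tendsto.mul_const
      exact tendsto_pow_atTop_nhds_zero_of_lt_one hr0 hr1
    have := ge_of_tendsto' hlim (fun n => key n g L hL hgc hgb hglip)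
    calc |∫ x, g x ∂μ - ∫ x, g x ∂ν| ≤ 2 * (0 * L * K + 2 * M * ε) := this
      _ = 4 * M * ε := by ring
  -- conclude
  have hdist : |∫ x, g x ∂μ - ∫ x, g x ∂ν| ≤ 0 := by
    by_contra hcon
    push_neg at hcon
    have h4M : 0 < 4 * M + 1 := by linarith
    have := main (|∫ x, g x ∂μ - ∫ x, g x ∂ν| / (4 * M + 1) / 2) (by positivity)
    set d := |∫ x, g x ∂μ - ∫ x, g x ∂ν| with hd
    rw [div_div] at this
    have h2 : 4 * M * (d / ((4 * M + 1) * 2)) < d := by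
      rw [mul_div_assoc']
      rw [div_lt_iff₀ (by positivity)]
      nlinarith
    linarith
  have := abs_nonneg (∫ x, g x ∂μ - ∫ x, g x ∂ν)
  have : |∫ x, g x ∂μ - ∫ x, g x ∂ν| = 0 := le_antisymm hdist this
  linarith [abs_eq_zero.1 this, sub_eq_zero.1 (abs_eq_zero.1 this)]
-- helper: map over finset sum of measures
lemma map_finset_sum' {ι : Type} (s : Finset ι) (μ : ι → Measure ℝ) (f : ℝ → ℝ)
    (hf : Measurable f) :
    Measure.map f (∑ k ∈ s, μ k) = ∑ k ∈ s, Measure.map f (μ k) := by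
  classical
  induction s using Finset.induction with
  | empty => simp
  | insert _ _ h ih => rw [Finset.sum_insert h, Finset.sum_insert h, Measure.map_add _ _ hf, ih]

section App

variable (m N : ℕ) (ρ : ℝ)

/-- digit of the uniform IFS -/
def tdig (q : ℕ × ℕ × ℕ) : ℝ :=
  (q.1 : ℝ) + 2 * m * (q.2.1 : ℝ) + (1 + m * ρ - 2 * N * m) * (q.2.2 : ℝ)

def s2 : Finset (ℕ × ℕ × ℕ) := Finset.range m ×ˢ Finset.range N ×ˢ Finset.range 2

lemma mem_s2 (q : ℕ × ℕ × ℕ) : q ∈ s2 m N ↔ q.1 < m ∧ q.2.1 < N ∧ q.2.2 < 2 := by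
  simp [s2, Finset.mem_product]

/-- reflection-conjugation flip -/
def flipR (q : ℕ × ℕ × ℕ) : ℕ × ℕ × ℕ := (m - 1 - q.1, (N - 1 - q.2.1, 1 - q.2.2))

lemma flipR_mem {q : ℕ × ℕ × ℕ} (hq : q ∈ s2 m N) (hm : 0 < m) (hN : 0 < N) :
    flipR m N q ∈ s2 m N := by
  rw [mem_s2] at hq ⊢
  obtain ⟨h1, h2, h3⟩ := hq
  refine ⟨?_, ?_, ?_⟩ <;> simp [flipR] <;> omega

lemma flipR_flipR {q : ℕ × ℕ × ℕ} (hq : q ∈ s2 m N) : flipR m N (flipR m N q) = q := by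
  rw [mem_s2] at hq
  obtain ⟨h1, h2, h3⟩ := hq
  simp only [flipR]
  ext <;> simp <;> omega

lemma tdig_flipR {q : ℕ × ℕ × ℕ} (hq : q ∈ s2 m N) :
    tdig m N ρ (flipR m N q) = m * ρ - m - tdig m N ρ q := by
  rw [mem_s2] at hq
  obtain ⟨h1, h2, h3⟩ := hq
  simp only [tdig, flipR]
  have e1 : ((m - 1 - q.1 : ℕ) : ℝ) = (m : ℝ) - 1 - (q.1 : ℝ) := by
    have : m - 1 - q.1 = m - (1 + q.1) := by omega
    rw [this, Nat.cast_sub (by omega)]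
    push_cast; ring
  have e2 : ((N - 1 - q.2.1 : ℕ) : ℝ) = (N : ℝ) - 1 - (q.2.1 : ℝ) := by
    have : N - 1 - q.2.1 = N - (1 + q.2.1) := by omega
    rw [this, Nat.cast_sub (by omega)]
    push_cast; ring
  have e3 : ((1 - q.2.2 : ℕ) : ℝ) = 1 - (q.2.2 : ℝ) := by
    rw [Nat.cast_sub (by omega)]
    push_cast; ring
  rw [e1, e2, e3]
  ring

lemma card_s2 : ((s2 m N).card : ℝ≥0∞) = ((2 * N * m : ℕ) : ℝ≥0∞) := by
  simp only [s2, Finset.card_product, Finset.card_range]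
  norm_cast
  ring

/-- Step 1: reflection symmetry of μ -/
lemma map_reflect_eq (hm : 0 < m) (hN : 0 < N) (hρ0 : 0 < ρ) (hρ1 : ρ < 1)
    (μ : Measure ℝ) [IsProbabilityMeasure μ]
    (hμ : μ = (((s2 m N).card : ℕ) : ℝ≥0∞)⁻¹ •
      ∑ q ∈ s2 m N, Measure.map (fun x => ρ * x + ρ * tdig m N ρ q) μ) :
    Measure.map (fun x : ℝ => -x - m * ρ) μ = μ := by
  have hRmeas : Measurable (fun x : ℝ => -x - m * ρ) := by fun_prop
  have hτmeas : ∀ q : ℕ × ℕ × ℕ, Measurable (fun x : ℝ => ρ * x + ρ * tdig m N ρ q) := by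
    intro q; fun_prop
  haveI : IsProbabilityMeasure (Measure.map (fun x : ℝ => -x - m * ρ) μ) :=
    Measure.isProbabilityMeasure_map hRmeas.aemeasurable
  have hcardpos : 0 < (s2 m N).card := by
    simp only [s2, Finset.card_product, Finset.card_range]
    exact Nat.mul_pos hm (Nat.mul_pos hN (by norm_num))
  have key : Measure.map (fun x : ℝ => -x - m * ρ) μ = (((s2 m N).card : ℕ) : ℝ≥0∞)⁻¹ •
      ∑ q ∈ s2 m N, Measure.map (fun x => ρ * x + ρ * tdig m N ρ q)
        (Measure.map (fun x : ℝ => -x - m * ρ) μ) := by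
    conv_lhs => rw [hμ]
    rw [Measure.map_smul, map_finset_sum' _ _ _ hRmeas]
    congr 1
    have hterm : ∀ q ∈ s2 m N,
        Measure.map (fun x : ℝ => -x - m * ρ) (Measure.map (fun x => ρ * x + ρ * tdig m N ρ q) μ)
        = Measure.map (fun x => ρ * x + ρ * tdig m N ρ (flipR m N q))
            (Measure.map (fun x : ℝ => -x - m * ρ) μ) := by
      intro q hq
      rw [Measure.map_map hRmeas (hτmeas q), Measure.map_map (hτmeas _) hRmeas]
      congr 1
      funext x
      simp only [Function.comp]
      rw [tdig_flipR m N ρ hq]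
      ring
    rw [Finset.sum_congr rfl hterm]
    exact Finset.sum_nbij' (flipR m N) (flipR m N)
      (fun q hq => flipR_mem m N hq hm hN) (fun q hq => flipR_mem m N hq hm hN)
      (fun q hq => flipR_flipR m N hq) (fun q hq => flipR_flipR m N hq)
      (fun q hq => rfl)
  exact selfSimilar_unique (s2 m N) hcardpos (fun _ => ρ) (fun q => ρ * tdig m N ρ q) ρ
    hρ0.le hρ1 (fun q _ => by rw [abs_of_pos hρ0]) _ _ key hμ

end App
section App2

def toTriple (m d : ℕ) : ℕ × ℕ × ℕ := (d % m, ((d / m) / 2, (d / m) % 2))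
def ofTriple (m : ℕ) (q : ℕ × ℕ × ℕ) : ℕ := q.1 + m * (2 * q.2.1 + q.2.2)
def flipO (m N : ℕ) (q : ℕ × ℕ × ℕ) : ℕ × ℕ × ℕ :=
  if q.2.2 = 0 then q else (m - 1 - q.1, (N - 1 - q.2.1, 1))

variable (m N : ℕ)

lemma toTriple_mem (hm : 0 < m) {d : ℕ} (hd : d < 2 * N * m) : toTriple m d ∈ s2 m N := by
  rw [mem_s2]
  refine ⟨Nat.mod_lt _ hm, ?_, Nat.mod_lt _ (by norm_num)⟩
  have h1 : d / m < 2 * N := by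
    rw [Nat.div_lt_iff_lt_mul hm]
    calc d < 2 * N * m := hd
      _ = 2 * N * m := rfl
  simp only [toTriple]
  omega

lemma ofTriple_toTriple (hm : 0 < m) (d : ℕ) : ofTriple m (toTriple m d) = d := by
  simp only [ofTriple, toTriple]
  have h2 : 2 * ((d / m) / 2) + (d / m) % 2 = d / m := by omega
  rw [h2, Nat.mod_add_div]

lemma toTriple_ofTriple (hm : 0 < m) {q : ℕ × ℕ × ℕ} (hq : q ∈ s2 m N) :
    toTriple m (ofTriple m q) = q := by
  rw [mem_s2] at hq
  obtain ⟨h1, h2, h3⟩ := hq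
  simp only [ofTriple, toTriple]
  rw [Nat.add_mul_mod_self_left, Nat.mod_eq_of_lt h1,
    Nat.add_mul_div_left _ _ hm, Nat.div_eq_of_lt h1]
  ext <;> simp <;> omega

lemma ofTriple_lt {q : ℕ × ℕ × ℕ} (hq : q ∈ s2 m N) : ofTriple m q < 2 * N * m := by
  rw [mem_s2] at hq
  obtain ⟨h1, h2, h3⟩ := hq
  have : 2 * q.2.1 + q.2.2 + 1 ≤ 2 * N := by omega
  calc ofTriple m q < m + m * (2 * q.2.1 + q.2.2) := by simp [ofTriple]; omega
    _ = m * (2 * q.2.1 + q.2.2 + 1) := by ring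
    _ ≤ m * (2 * N) := Nat.mul_le_mul_left m this
    _ = 2 * N * m := by ring

lemma ofTriple_div (hm : 0 < m) {q : ℕ × ℕ × ℕ} (hq : q ∈ s2 m N) :
    ofTriple m q / m = 2 * q.2.1 + q.2.2 := by
  rw [mem_s2] at hq
  simp only [ofTriple]
  rw [Nat.add_mul_div_left _ _ hm, Nat.div_eq_of_lt hq.1]
  omega

lemma flipO_mem (hm : 0 < m) (hN : 0 < N) {q : ℕ × ℕ × ℕ} (hq : q ∈ s2 m N) :
    flipO m N q ∈ s2 m N := by
  rw [mem_s2] at hq ⊢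
  simp only [flipO]
  split
  · exact hq
  · simp only []
    refine ⟨by omega, by omega, by omega⟩

lemma flipO_flipO {q : ℕ × ℕ × ℕ} (hq : q ∈ s2 m N) : flipO m N (flipO m N q) = q := by
  rw [mem_s2] at hq
  obtain ⟨h1, h2, h3⟩ := hq
  simp only [flipO]
  by_cases h : q.2.2 = 0
  · simp [h]
  · simp only [h, if_false]
    have : q.2.2 = 1 := by omega
    ext <;> simp <;> omega

end App2
/-- the self-similar measure `ν` for the IFS
`{τ_d(x) = (-1)^{⌊d/m⌋} ρ(x+d)}_{d=0}^{2Nm-1}` (equal weights) coincides with the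
self-similar measure `μ` for the IFS `{x ↦ ρ(x+d)}_{d ∈ D}` with
`D = D_m ⊕ 2mD_N ⊕ (1+mρ-2Nm)D_2`. -/
theorem alternating_eq_uniform (m N : ℕ) (hm : 0 < m) (hN : 0 < N) (ρ : ℝ)
    (hρ : ρ ∈ Set.Ioo (0 : ℝ) 1)
    (ν μ : Measure ℝ) [IsProbabilityMeasure ν] [IsProbabilityMeasure μ]
    (hν : ν = (2 * N * m : ℝ≥0∞)⁻¹ • ∑ d ∈ Finset.range (2 * N * m),
      Measure.map (fun x : ℝ => (-1 : ℝ) ^ (d / m) * ρ * (x + (d : ℝ))) ν)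
    (hμ : μ = (2 * N * m : ℝ≥0∞)⁻¹ •
      ∑ q ∈ Finset.range m ×ˢ Finset.range N ×ˢ Finset.range 2,
        Measure.map (fun x : ℝ => ρ * (x + ((q.1 : ℝ) + 2 * m * (q.2.1 : ℝ) +
          (1 + m * ρ - 2 * N * m) * (q.2.2 : ℝ)))) μ) :
    ν = μ := by
  obtain ⟨hρ0, hρ1⟩ := hρ
  have hcoef : (2 * N * m : ℝ≥0∞) = ((2 * N * m : ℕ) : ℝ≥0∞) := by push_cast; ring
  have hRmeas : Measurable (fun x : ℝ => -x - m * ρ) := by fun_prop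
  have hτmeas : ∀ q : ℕ × ℕ × ℕ, Measurable (fun x : ℝ => ρ * x + ρ * tdig m N ρ q) := by
    intro q; fun_prop
  -- normal form of hμ
  have hμ' : μ = (((s2 m N).card : ℕ) : ℝ≥0∞)⁻¹ •
      ∑ q ∈ s2 m N, Measure.map (fun x => ρ * x + ρ * tdig m N ρ q) μ := by
    rw [card_s2, ← hcoef]
    conv_lhs => rw [hμ]
    congr 1
    apply Finset.sum_congr rfl
    intro q _
    congr 1
    funext x
    simp only [tdig]
    ring
  -- Step 1: reflection symmetry
  have hR := map_reflect_eq m N ρ hm hN hρ0 hρ1 μ hμ'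
  -- Step 2: reindexing the alternating sum applied to μ
  have hstep : ∑ d ∈ Finset.range (2 * N * m),
      Measure.map (fun x : ℝ => (-1 : ℝ) ^ (d / m) * ρ * (x + (d : ℝ))) μ
      = ∑ q ∈ s2 m N, Measure.map (fun x => ρ * x + ρ * tdig m N ρ q) μ := by
    have h1 : ∑ d ∈ Finset.range (2 * N * m),
        Measure.map (fun x : ℝ => (-1 : ℝ) ^ (d / m) * ρ * (x + (d : ℝ))) μ
        = ∑ q ∈ s2 m N, Measure.map (fun x : ℝ =>
            (-1 : ℝ) ^ (ofTriple m q / m) * ρ * (x + (ofTriple m q : ℝ))) μ := by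
      apply Finset.sum_nbij' (toTriple m) (ofTriple m)
      · intro d hd
        exact toTriple_mem m N hm (Finset.mem_range.1 hd)
      · intro q hq
        exact Finset.mem_range.2 (ofTriple_lt m N hq)
      · intro d _
        exact ofTriple_toTriple m hm d
      · intro q hq
        exact toTriple_ofTriple m N hm hq
      · intro d _
        rw [ofTriple_toTriple m hm d]
    rw [h1]
    have h2 : ∀ q ∈ s2 m N, Measure.map (fun x : ℝ =>
        (-1 : ℝ) ^ (ofTriple m q / m) * ρ * (x + (ofTriple m q : ℝ))) μ
        = Measure.map (fun x => ρ * x + ρ * tdig m N ρ (flipO m N q)) μ := by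
      intro q hq
      have hmem := (mem_s2 m N q).1 hq
      obtain ⟨h1', h2', h3'⟩ := hmem
      rw [ofTriple_div m N hm hq]
      have hcast : ((ofTriple m q : ℕ) : ℝ) = (q.1 : ℝ) + m * (2 * q.2.1 + q.2.2) := by
        simp only [ofTriple]; push_cast; ring
      by_cases he : q.2.2 = 0
      · -- even block: trivial identification
        have hsign : (-1 : ℝ) ^ (2 * q.2.1 + q.2.2) = 1 := by
          rw [he, add_zero, pow_mul]
          norm_num
        rw [hsign]
        congr 1
        funext x
        rw [hcast]
        have hfq : flipO m N q = q := by simp [flipO, he]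
        rw [hfq]
        simp only [tdig]
        rw [he]
        push_cast
        ring
      · -- odd block: use the reflection symmetry
        have he1 : q.2.2 = 1 := by omega
        have hsign : (-1 : ℝ) ^ (2 * q.2.1 + q.2.2) = -1 := by
          rw [he1, pow_add, pow_mul]
          norm_num
        rw [hsign]
        have hflip : flipO m N q = flipR m N (q.1, (q.2.1, 0)) := by
          simp only [flipO, flipR, he, if_neg he]
          rfl
        have hq0 : (q.1, (q.2.1, (0:ℕ))) ∈ s2 m N := by
          rw [mem_s2]; exact ⟨h1', h2', by norm_num⟩
        have htd : tdig m N ρ (flipO m N q) = m * ρ - m - ((q.1:ℝ) + 2 * m * q.2.1) := by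
          rw [hflip, tdig_flipR m N ρ hq0]
          simp [tdig]
        have hcomp : (fun x : ℝ => (-1 : ℝ) * ρ * (x + (ofTriple m q : ℝ)))
            = (fun x => ρ * x + ρ * tdig m N ρ (flipO m N q)) ∘ (fun x : ℝ => -x - m * ρ) := by
          funext x
          simp only [Function.comp, htd, hcast, he1]
          push_cast
          ring
        rw [hcomp, ← Measure.map_map (hτmeas _) hRmeas, hR]
    rw [Finset.sum_congr rfl h2]
    apply Finset.sum_nbij' (flipO m N) (flipO m N)
    · intro q hq; exact flipO_mem m N hm hN hq
    · intro q hq; exact flipO_mem m N hm hN hq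
    · intro q hq; exact flipO_flipO m N hq
    · intro q hq; exact flipO_flipO m N hq
    · intro q hq; rfl
  -- μ satisfies the alternating equation
  have hμν : μ = (2 * N * m : ℝ≥0∞)⁻¹ • ∑ d ∈ Finset.range (2 * N * m),
      Measure.map (fun x : ℝ => (-1 : ℝ) ^ (d / m) * ρ * (x + (d : ℝ))) μ := by
    rw [hstep, hcoef, ← card_s2]
    exact hμ'
  -- apply uniqueness for the alternating IFS
  have hcard : ((Finset.range (2 * N * m)).card : ℝ≥0∞) = (2 * N * m : ℝ≥0∞) := by
    rw [Finset.card_range, hcoef]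
  have hnormal : ∀ (ρ' : Measure ℝ), (ρ' = (2 * N * m : ℝ≥0∞)⁻¹ • ∑ d ∈ Finset.range (2 * N * m),
      Measure.map (fun x : ℝ => (-1 : ℝ) ^ (d / m) * ρ * (x + (d : ℝ))) ρ') →
      ρ' = (((Finset.range (2 * N * m)).card : ℕ) : ℝ≥0∞)⁻¹ • ∑ d ∈ Finset.range (2 * N * m),
      Measure.map (fun x : ℝ => ((-1 : ℝ) ^ (d / m) * ρ) * x + ((-1 : ℝ) ^ (d / m) * ρ * d)) ρ' := by
    intro ρ' h
    rw [Finset.card_range, ← hcoef]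
    conv_lhs => rw [h]
    congr 1
    apply Finset.sum_congr rfl
    intro d _
    congr 1
    funext x
    ring
  have hcardpos : 0 < (Finset.range (2 * N * m)).card := by
    rw [Finset.card_range]
    positivity
  exact selfSimilar_unique (Finset.range (2 * N * m)) hcardpos
    (fun d => (-1 : ℝ) ^ (d / m) * ρ) (fun d => (-1 : ℝ) ^ (d / m) * ρ * d) ρ hρ0.le hρ1
    (fun d _ => by rw [abs_mul, abs_pow, abs_neg, abs_one, one_pow, one_mul, abs_of_pos hρ0])
    ν μ (hnormal ν hν) (hnormal μ hμν)
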